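/- Let a > 0, d ≥ 0, and let φ ∈ C([−1,0]) satisfy φ(t) < 0 for t ∈ [−1,0) and φ(0) = −d. If x : [−1,∞) → ℝ is a solution of the relay equation ẋ(t) = R(x(t−1)) with initial function φ, then x(t) = x0(t − d) for all t ≥ d, where x0 is the T0-periodic function with x0(t) = t on [0,1], x0(t) = −a(t − t0) on [1, t0+1], x0(t) = t − T0 on [t0+1, T0]. -/

import Mathlib

/-- The relay nonlinearity: `R a x = 1` if `x ≤ 0`, and `R a x = -a` if `x > 0`. -/
noncomputable def R (a x : ℝ) : ℝ := if x ≤ 0 then 1 else -a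

/-- `x : [-1,∞) → ℝ` is a solution of the relay equation `x'(t) = R a (x (t-1))`
with initial function `φ ∈ C([-1,0])`: `x` is continuous on `[-1,∞)`, coincides
with `φ` on `[-1,0]`, and for every `t > 0` outside an exceptional set having
finitely many points in each bounded interval, `x` is differentiable at `t` with
`x'(t) = R a (x (t-1))`. -/
def IsSolution (a : ℝ) (φ x : ℝ → ℝ) : Prop :=
  ContinuousOn x (Set.Ici (-1 : ℝ)) ∧
  (∀ t ∈ Set.Icc (-1 : ℝ) 0, x t = φ t) ∧
  ∃ S : Set ℝ, (∀ A B : ℝ, (S ∩ Set.Icc A B).Finite) ∧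
    ∀ t : ℝ, 0 < t → t ∉ S → HasDerivAt x (R a (x (t - 1))) t

open Set

/-- A continuous function with derivative `c` on the interior of an interval is linear. -/
private lemma lin0 (f : ℝ → ℝ) (c A B : ℝ)
    (hcont : ContinuousOn f (Icc A B))
    (hderiv : ∀ t ∈ Ioo A B, HasDerivAt f c t) :
    ∀ t ∈ Icc A B, f t = f A + c * (t - A) := by
  intro t ht
  set g : ℝ → ℝ := fun s => f s - c * s with hg
  have hgc : ContinuousOn g (Icc A B) :=
    hcont.sub ((continuous_const.mul continuous_id).continuousOn)
  have hgd : ∀ s ∈ interior (Icc A B), HasDerivAt g 0 s := by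
    rw [interior_Icc]
    intro s hs
    have h : HasDerivAt (fun s => f s - c * s) (c - c * 1) s :=
      (hderiv s hs).sub ((hasDerivAt_id s).const_mul c)
    show HasDerivAt (fun s => f s - c * s) 0 s
    rw [show (0:ℝ) = c - c * 1 by ring]
    exact h
  have hdiff : DifferentiableOn ℝ g (interior (Icc A B)) :=
    fun s hs => ((hgd s hs).differentiableAt).differentiableWithinAt
  have hd0 : ∀ s ∈ interior (Icc A B), deriv g s = 0 := fun s hs => (hgd s hs).deriv
  have hmono : MonotoneOn g (Icc A B) :=
    monotoneOn_of_deriv_nonneg (convex_Icc A B) hgc hdiff (fun s hs => (hd0 s hs).ge)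
  have hanti : AntitoneOn g (Icc A B) :=
    antitoneOn_of_deriv_nonpos (convex_Icc A B) hgc hdiff (fun s hs => (hd0 s hs).le)
  have hAmem : A ∈ Icc A B := left_mem_Icc.2 (ht.1.trans ht.2)
  have h1 := hmono hAmem ht ht.1
  have h2 := hanti hAmem ht ht.1
  have hgt : g t = g A := le_antisymm h2 h1
  simp only [hg] at hgt
  linarith

/-- Same, allowing finitely many exceptional points. -/
private lemma lin1 (c : ℝ) (F : Finset ℝ) :
    ∀ (f : ℝ → ℝ) (A B : ℝ), ContinuousOn f (Icc A B) →
      (∀ t ∈ Ioo A B, t ∉ F → HasDerivAt f c t) →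
      ∀ t ∈ Icc A B, f t = f A + c * (t - A) := by
  induction F using Finset.induction_on with
  | empty =>
    intro f A B hcont hderiv t ht
    exact lin0 f c A B hcont (fun s hs => hderiv s hs (by simp)) t ht
  | @insert p F' hp ih =>
    intro f A B hcont hderiv t ht
    by_cases hpmem : p ∈ Ioo A B
    · have hAp : A ≤ p := hpmem.1.le
      have hpB : p ≤ B := hpmem.2.le
      have h1 : ∀ t ∈ Icc A p, f t = f A + c * (t - A) := by
        refine ih f A p (hcont.mono (Icc_subset_Icc_right hpB)) ?_
        intro s hs hsF
        refine hderiv s (Ioo_subset_Ioo_right hpB hs) ?_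
        simp only [Finset.mem_insert]
        push_neg
        exact ⟨ne_of_lt hs.2, hsF⟩
      have h2 : ∀ t ∈ Icc p B, f t = f p + c * (t - p) := by
        refine ih f p B (hcont.mono (Icc_subset_Icc_left hAp)) ?_
        intro s hs hsF
        refine hderiv s (Ioo_subset_Ioo_left hAp hs) ?_
        simp only [Finset.mem_insert]
        push_neg
        exact ⟨ne_of_gt hs.1, hsF⟩
      rcases le_total t p with h | h
      · exact h1 t ⟨ht.1, h⟩
      · have h3 := h2 t ⟨h, ht.2⟩
        rw [h1 p ⟨hAp, le_refl p⟩] at h3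
        rw [h3]; ring
    · refine ih f A B hcont ?_ t ht
      intro s hs hsF
      refine hderiv s hs ?_
      simp only [Finset.mem_insert]
      push_neg
      exact ⟨fun h => hpmem (h ▸ hs), hsF⟩

/-- Bootstrap lemma: if the relay value is `c` on the relevant delayed range
(via known values on `(A-1, A]` and via the candidate linear formula on
`(A, B-1)`), then the solution is linear with slope `c` on `[A, B]`. -/
private lemma key (a c : ℝ) (x : ℝ → ℝ) (S : Set ℝ)
    (hSfin : ∀ A B : ℝ, (S ∩ Icc A B).Finite)
    (hcont : ContinuousOn x (Ici (-1 : ℝ)))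
    (hderiv : ∀ t : ℝ, 0 < t → t ∉ S → HasDerivAt x (R a (x (t - 1))) t)
    (A B : ℝ) (hA : 0 ≤ A) (hAB : A ≤ B)
    (h1 : ∀ s, A - 1 < s → s ≤ A → R a (x s) = c)
    (h2 : ∀ s, A < s → s < B - 1 → R a (x A + c * (s - A)) = c) :
    ∀ t ∈ Icc A B, x t = x A + c * (t - A) := by
  set P : Set ℝ := {t | t ∈ Icc A B ∧ ∀ s ∈ Icc A t, x s = x A + c * (s - A)} with hPdef
  have hPA : A ∈ P := by
    refine ⟨left_mem_Icc.2 hAB, fun s hs => ?_⟩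
    have : s = A := le_antisymm hs.2 hs.1
    simp [this]
  have hPne : P.Nonempty := ⟨A, hPA⟩
  have hPbdd : BddAbove P := ⟨B, fun t ht => ht.1.2⟩
  set M := sSup P with hMdef
  have hAM : A ≤ M := le_csSup hPbdd hPA
  have hMB : M ≤ B := csSup_le hPne (fun t ht => ht.1.2)
  have hMP : ∀ s ∈ Icc A M, x s = x A + c * (s - A) := by
    intro s hs
    rcases lt_or_eq_of_le hs.2 with hsM | hEq
    · obtain ⟨t', ht', hst'⟩ := exists_lt_of_lt_csSup hPne hsM
      exact ht'.2 s ⟨hs.1, hst'.le⟩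
    · rcases lt_or_eq_of_le hs.1 with hAs | hAEq
      · -- s = M, A < s : use continuity
        have hform : ∀ r ∈ Ioo A s, x r = x A + c * (r - A) := by
          intro r hr
          obtain ⟨t', ht', hrt'⟩ := exists_lt_of_lt_csSup hPne (hEq ▸ hr.2)
          exact ht'.2 r ⟨hr.1.le, hrt'.le⟩
        have hclo : s ∈ closure (Ioo A s) := by
          rw [closure_Ioo (ne_of_lt hAs)]
          exact right_mem_Icc.2 hAs.le
        haveI hne : (nhdsWithin s (Ioo A s)).NeBot :=
          mem_closure_iff_nhdsWithin_neBot.1 hclo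
        have hsub : Ioo A s ⊆ Ici (-1 : ℝ) := fun r hr => le_trans (by linarith) hr.1.le
        have l1 : Filter.Tendsto x (nhdsWithin s (Ioo A s)) (nhds (x s)) :=
          (hcont s (by simp only [mem_Ici]; linarith)).mono hsub
        have l2 : Filter.Tendsto (fun r => x A + c * (r - A)) (nhdsWithin s (Ioo A s))
            (nhds (x A + c * (s - A))) := by
          apply Filter.Tendsto.mono_left _ nhdsWithin_le_nhds
          exact ((continuous_const.add (continuous_const.mul (continuous_id.sub continuous_const))).tendsto s)
        have heq : x =ᶠ[nhdsWithin s (Ioo A s)] fun r => x A + c * (r - A) :=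
          Filter.eventually_of_mem self_mem_nhdsWithin (fun r hr => hform r hr)
        exact tendsto_nhds_unique (l1.congr' heq) l2
      · rw [← hAEq]; simp
  have hMeqB : M = B := by
    by_contra hneq
    have hMltB : M < B := lt_of_le_of_ne hMB hneq
    set ε := min 1 (B - M) with hε
    have hε0 : 0 < ε := lt_min one_pos (by linarith)
    have hε1 : ε ≤ 1 := min_le_left _ _
    have hεBM : ε ≤ B - M := min_le_right _ _
    have hfin := hSfin M (M + ε)
    have hloc : ∀ t ∈ Icc M (M + ε), x t = x M + c * (t - M) := by
      apply lin1 c hfin.toFinset x M (M + ε)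
      · apply hcont.mono
        intro r hr
        simp only [mem_Icc] at hr
        simp only [mem_Ici]
        linarith
      · intro t ht htF
        have htS : t ∉ S := fun h => htF (hfin.mem_toFinset.2 ⟨h, ht.1.le, ht.2.le⟩)
        have ht0 : (0 : ℝ) < t := by linarith [ht.1]
        have hR : R a (x (t - 1)) = c := by
          rcases le_or_gt (t - 1) A with hle | hgt
          · exact h1 _ (by linarith [ht.1]) hle
          · have htm : t - 1 ∈ Icc A M := ⟨hgt.le, by linarith [ht.2]⟩
            rw [hMP _ htm]
            exact h2 _ hgt (by linarith [ht.2])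
        rw [← hR]
        exact hderiv t ht0 htS
    have hMεP : M + ε ∈ P := by
      constructor
      · exact ⟨by linarith, by linarith⟩
      · intro s hs
        rcases le_total s M with h | h
        · exact hMP s ⟨hs.1, h⟩
        · have h3 := hloc s ⟨h, hs.2⟩
          rw [hMP M ⟨hAM, le_refl M⟩] at h3
          rw [h3]; ring
    have : M + ε ≤ M := le_csSup hPbdd hMεP
    linarith
  intro t ht
  exact hMP t ⟨ht.1, hMeqB ▸ ht.2⟩

/-- a solution with a negative initial function taking the value
`-d` (`d ≥ 0`) at `0` coincides with `x0 (t - d)` for all `t ≥ d`. -/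
theorem stmt_2 (a : ℝ) (ha : 0 < a) (d : ℝ) (hd : 0 ≤ d) (t0 T0 : ℝ)
    (ht0 : t0 = (a + 1) / a) (hT0 : T0 = (a + 1) ^ 2 / a)
    (φ : ℝ → ℝ) (hφc : ContinuousOn φ (Set.Icc (-1 : ℝ) 0))
    (hφneg : ∀ t ∈ Set.Ico (-1 : ℝ) 0, φ t < 0) (hφ0 : φ 0 = -d)
    (x : ℝ → ℝ) (hx : IsSolution a φ x)
    (x0 : ℝ → ℝ)
    (hx0per : ∀ t : ℝ, x0 (t + T0) = x0 t)
    (hx0a : ∀ t ∈ Set.Icc (0 : ℝ) 1, x0 t = t)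
    (hx0b : ∀ t ∈ Set.Icc (1 : ℝ) (t0 + 1), x0 t = -a * (t - t0))
    (hx0c : ∀ t ∈ Set.Icc (t0 + 1) T0, x0 t = t - T0) :
    ∀ t : ℝ, d ≤ t → x t = x0 (t - d) := by
  obtain ⟨hxc, hxφ, S, hSfin, hxderiv⟩ := hx
  have hane : a ≠ 0 := ne_of_gt ha
  have hat0 : a * t0 = a + 1 := by rw [ht0]; field_simp
  have hT0eq : T0 = t0 + 1 + a := by rw [hT0, ht0]; field_simp; ring
  have ht01 : 1 < t0 := by rw [ht0, lt_div_iff₀ ha]; linarith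
  have hT0pos : 0 < T0 := by rw [hT0eq]; linarith
  have hx0shift : ∀ (n : ℕ) (s : ℝ), x0 (s + n * T0) = x0 s := by
    intro n
    induction n with
    | zero => intro s; norm_num
    | succ k ih =>
      intro s
      have h : s + ((k : ℕ) + 1 : ℝ) * T0 = (s + k * T0) + T0 := by ring
      push_cast
      rw [h, hx0per (s + k * T0), ih s]
  have hx0id : ∀ s : ℝ, -a ≤ s → s ≤ 1 → x0 s = s := by
    intro s hs1 hs2
    rcases le_or_gt 0 s with h | h
    · exact hx0a s ⟨h, hs2⟩
    · have h3 := hx0c (s + T0) ⟨by rw [hT0eq]; linarith, by linarith⟩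
      rw [hx0per s] at h3
      rw [h3]; ring
  have hx0val : x 0 = -d := by
    rw [hxφ 0 ⟨by norm_num, le_rfl⟩, hφ0]
  -- Phase 0 : slope 1 on [0, d+1]
  have P0 : ∀ t ∈ Icc (0 : ℝ) (d + 1), x t = t - d := by
    have hA1 : ∀ s, (0:ℝ) - 1 < s → s ≤ 0 → R a (x s) = 1 := by
      intro s hs1 hs2
      have hxs : x s = φ s := hxφ s ⟨by linarith, hs2⟩
      have hle : x s ≤ 0 := by
        rw [hxs]
        rcases lt_or_eq_of_le hs2 with h' | h'
        · exact (hφneg s ⟨by linarith, h'⟩).le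
        · rw [h', hφ0]; linarith
      simp only [R]; rw [if_pos hle]
    have hA2 : ∀ s, (0:ℝ) < s → s < (d + 1) - 1 → R a (x 0 + 1 * (s - 0)) = 1 := by
      intro s hs1 hs2
      have hle : x 0 + 1 * (s - 0) ≤ 0 := by rw [hx0val]; linarith
      simp only [R]; rw [if_pos hle]
    have h := key a 1 x S hSfin hxc hxderiv 0 (d + 1) le_rfl (by linarith) hA1 hA2
    intro t ht
    rw [h t ht, hx0val]; ring
  -- Main induction
  have hK : ∀ n : ℕ, ∀ t ∈ Icc d (d + 1 + n * T0), x t = x0 (t - d) := by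
    intro n
    induction n with
    | zero =>
      intro t ht
      norm_num at ht
      rw [P0 t ⟨by linarith [ht.1], ht.2⟩,
        hx0id (t - d) (by linarith [ht.1]) (by linarith [ht.2])]
    | succ n ihn =>
      intro t ht
      set u := d + n * T0 with hu
      have hnT0 : (0:ℝ) ≤ (n : ℝ) * T0 := mul_nonneg (Nat.cast_nonneg n) hT0pos.le
      have hdu : d ≤ u := by rw [hu]; linarith
      have ht2 : t ≤ u + T0 + 1 := by
        have h2 := ht.2; push_cast at h2; rw [hu]; linarith
      have hup : ∀ s ∈ Icc u (u + 1), x s = s - u := by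
        intro s hs
        have h := ihn s ⟨by linarith [hs.1], by rw [hu] at hs; linarith [hs.2]⟩
        rw [h, show s - d = (s - u) + n * T0 by rw [hu]; ring, hx0shift n (s - u)]
        exact hx0a _ ⟨by linarith [hs.1], by linarith [hs.2]⟩
      have hu0 : (0:ℝ) ≤ u + 1 := by linarith
      -- Phase D : slope -a on [u+1, u+t0+1]
      have PD : ∀ r ∈ Icc (u + 1) (u + t0 + 1), x r = 1 - a * (r - u - 1) := by
        have hD1 : ∀ s, (u + 1) - 1 < s → s ≤ u + 1 → R a (x s) = -a := by
          intro s hs1 hs2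
          have hxs : x s = s - u := hup s ⟨by linarith, by linarith⟩
          have hpos : ¬ x s ≤ 0 := by rw [hxs]; push_neg; linarith
          simp only [R]; rw [if_neg hpos]
        have hx1 : x (u + 1) = 1 := by
          rw [hup (u + 1) ⟨by linarith, le_rfl⟩]; ring
        have hD2 : ∀ s, u + 1 < s → s < (u + t0 + 1) - 1 →
            R a (x (u + 1) + (-a) * (s - (u + 1))) = -a := by
          intro s hs1 hs2
          rw [hx1]
          have hpos : ¬ (1 + (-a) * (s - (u + 1)) ≤ 0) := by
            push_neg
            nlinarith [mul_pos ha (show (0:ℝ) < u + t0 - s by linarith), hat0]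
          simp only [R]; rw [if_neg hpos]
        have h := key a (-a) x S hSfin hxc hxderiv (u + 1) (u + t0 + 1) hu0
          (by linarith) hD1 hD2
        intro r hr
        rw [h r hr, hx1]; ring
      have hxd : x (u + t0 + 1) = -a := by
        rw [PD (u + t0 + 1) ⟨by linarith, le_rfl⟩]
        linear_combination -hat0
      -- Phase U : slope 1 on [u+t0+1, u+T0+1]
      have PU : ∀ r ∈ Icc (u + t0 + 1) (u + T0 + 1), x r = r - u - T0 := by
        have hU1 : ∀ s, (u + t0 + 1) - 1 < s → s ≤ u + t0 + 1 → R a (x s) = 1 := by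
          intro s hs1 hs2
          have hxs : x s = 1 - a * (s - u - 1) := PD s ⟨by linarith, hs2⟩
          have hneg : x s ≤ 0 := by
            rw [hxs]
            nlinarith [mul_pos ha (show (0:ℝ) < s - (u + t0) by linarith), hat0]
          simp only [R]; rw [if_pos hneg]
        have hU2 : ∀ s, u + t0 + 1 < s → s < (u + T0 + 1) - 1 →
            R a (x (u + t0 + 1) + 1 * (s - (u + t0 + 1))) = 1 := by
          intro s hs1 hs2
          rw [hxd]
          have hneg : -a + 1 * (s - (u + t0 + 1)) ≤ 0 := by
            rw [hT0eq] at hs2; linarith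
          simp only [R]; rw [if_pos hneg]
        have h := key a 1 x S hSfin hxc hxderiv (u + t0 + 1) (u + T0 + 1)
          (by linarith) (by rw [hT0eq]; linarith) hU1 hU2
        intro r hr
        rw [h r hr, hxd]; linarith [hT0eq]
      -- combine
      rcases le_total t (u + 1) with h | h
      · exact ihn t ⟨ht.1, by rw [hu] at h; linarith⟩
      · rcases le_total t (u + t0 + 1) with h' | h'
        · rw [PD t ⟨h, h'⟩, show t - d = (t - u) + n * T0 by rw [hu]; ring,
            hx0shift n, hx0b (t - u) ⟨by linarith, by linarith⟩]
          linear_combination -hat0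
        · rw [PU t ⟨h', ht2⟩,
            show t - d = (t - u - T0) + ((n + 1 : ℕ) : ℝ) * T0 by rw [hu]; push_cast; ring,
            hx0shift (n + 1),
            hx0id (t - u - T0) (by rw [hT0eq]; linarith) (by linarith)]
  intro t htd
  obtain ⟨n, hn⟩ := exists_nat_ge ((t - d - 1) / T0)
  have hle : t ≤ d + 1 + n * T0 := by
    rw [div_le_iff₀ hT0pos] at hn; linarith
  exact hK n t ⟨htd, hle⟩
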